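/- Let e_1 = 1, e_2 = Σ_r a_r I_r, e_3 = Σ_r b_r I_r in A_n^m and ζ = x e_1 + y e_2 + z e_3 with x,y,z ∈ ℝ, and set ξ_u = x + y a_u + z b_u for u = 1,...,m. For t ∈ ℂ with t ≠ ξ_u for all u = 1,...,m, the element t e_1 − ζ is invertible in A_n^m, and its inverse equals Σ_{r=1}^n A_r I_r where A_u = 1/(t − ξ_u) for u ≤ m, A_{m+1} = T_{m+1}/(t − ξ_{u_{m+1}})², and A_p = T_p/(t − ξ_{u_p})² + (1/(t − ξ_{u_p})) Σ_{r=m+1}^{p−1} A_r B_{r,p} for p = m+2,...,n, where T_p := y a_p + z b_p and B_{r,p} := Σ_{s=m+1}^{p−1} T_s Υ^s_{r,p}. -/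

import Mathlib

/-- Lemma 1: for `t ≠ ξ_u` (u = 1,…,m), the element `t e₁ − ζ` is invertible in
`A_n^m` and its inverse is `Σ_r A_r I_r`, where the coefficients `A_r` are given
by the recurrence relations of the paper. -/
theorem resolvent_expansion (n m : ℕ) (hm : m ≤ n) (A : Type*)
    [CommRing A] [Algebra ℂ A]
    (I : Module.Basis (Fin n) ℂ A)
    (hidem : ∀ r s : Fin n, r.val < m → s.val < m →
      I r * I s = if r = s then I r else 0)
    (Υ : Fin n → Fin n → Fin n → ℂ)
    (hnil : ∀ r s : Fin n, m ≤ r.val → m ≤ s.val →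
      I r * I s = ∑ k ∈ Finset.univ.filter (fun k : Fin n => max r.val s.val < k.val),
        Υ r s k • I k)
    (u : Fin n → Fin n)
    (hu : ∀ s : Fin n, m ≤ s.val → (u s).val < m)
    (hmul3 : ∀ s : Fin n, m ≤ s.val → ∀ r : Fin n, r.val < m →
      I r * I s = if r = u s then I s else 0)
    (hone : ∑ w ∈ Finset.univ.filter (fun w : Fin n => w.val < m), I w = 1)
    -- `e₁ = 1`, `e₂ = Σ a_r I_r`, `e₃ = Σ b_r I_r`, `ζ = x e₁ + y e₂ + z e₃`
    (a b : Fin n → ℂ) (x y z : ℝ) (e₂ e₃ ζ : A)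
    (he₂ : e₂ = ∑ r, a r • I r) (he₃ : e₃ = ∑ r, b r • I r)
    (hζ : ζ = (x : ℂ) • (1 : A) + (y : ℂ) • e₂ + (z : ℂ) • e₃)
    (ξ : Fin n → ℂ) (hξ : ∀ w, ξ w = (x : ℂ) + (y : ℂ) * a w + (z : ℂ) * b w)
    (T : Fin n → ℂ) (hT : ∀ p, T p = (y : ℂ) * a p + (z : ℂ) * b p)
    (B : Fin n → Fin n → ℂ)
    (hB : ∀ r p : Fin n, B r p =
      ∑ s ∈ Finset.univ.filter (fun s : Fin n => m ≤ s.val ∧ s < p), T s * Υ r s p)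
    (t : ℂ) (ht : ∀ w : Fin n, w.val < m → t ≠ ξ w)
    -- the recurrence relations defining the coefficients `A_r`
    (Ac : Fin n → ℂ)
    (hAc1 : ∀ w : Fin n, w.val < m → Ac w = 1 / (t - ξ w))
    (hAc2 : ∀ p : Fin n, m ≤ p.val →
      Ac p = T p / (t - ξ (u p)) ^ 2
        + (1 / (t - ξ (u p)))
            * ∑ r ∈ Finset.univ.filter (fun r : Fin n => m ≤ r.val ∧ r < p),
                Ac r * B r p) :
    IsUnit (algebraMap ℂ A t - ζ)
      ∧ (algebraMap ℂ A t - ζ) * (∑ r, Ac r • I r) = 1 := by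
  classical
  -- the coefficient of `t e₁ - ζ` in the basis
  set c : Fin n → ℂ := fun p => if (p : ℕ) < m then t - ξ p else -T p with hc
  -- structure constants of the multiplication, in all four cases
  set M : Fin n → Fin n → Fin n → ℂ := fun p q k =>
    if (p : ℕ) < m then
      (if (q : ℕ) < m then (if p = q ∧ k = p then (1:ℂ) else 0)
       else (if p = u q ∧ k = q then 1 else 0))
    else
      (if (q : ℕ) < m then (if q = u p ∧ k = p then 1 else 0)
       else (if max (p : ℕ) (q : ℕ) < (k : ℕ) then Υ q p k else 0)) with hMdef
  have h1 : (1 : A) = ∑ p : Fin n, (if (p : ℕ) < m then (1:ℂ) else 0) • I p := by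
    rw [← hone, Finset.sum_filter]
    exact Finset.sum_congr rfl fun p _ => by split <;> simp
  have hsub : algebraMap ℂ A t - ζ = ∑ p, c p • I p := by
    rw [Algebra.algebraMap_eq_smul_one, hζ, he₂, he₃, h1, Finset.smul_sum,
      Finset.smul_sum, Finset.smul_sum, Finset.smul_sum,
      ← Finset.sum_add_distrib, ← Finset.sum_add_distrib, ← Finset.sum_sub_distrib]
    refine Finset.sum_congr rfl fun p _ => ?_
    simp only [smul_smul, ← add_smul, ← sub_smul]
    congr 1
    by_cases hp : (p : ℕ) < m <;> simp [hc, hp, hξ, hT] <;> ring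
  have hM : ∀ p q : Fin n, I p * I q = ∑ k, M p q k • I k := by
    intro p q
    by_cases hp : (p : ℕ) < m <;> by_cases hq : (q : ℕ) < m
    · rw [hidem p q hp hq]
      by_cases hpq : p = q
      · subst hpq
        simp [hMdef, hp, hq, ite_smul, Finset.sum_ite_eq']
      · simp [hMdef, hp, hq, hpq]
    · rw [hmul3 q (le_of_not_gt hq) p hp]
      by_cases hpu : p = u q
      · simp [hMdef, hp, hq, hpu, hu q (le_of_not_gt hq), ite_smul, Finset.sum_ite_eq, eq_comm]
      · simp [hMdef, hp, hq, hpu]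
    · rw [mul_comm, hmul3 p (le_of_not_gt hp) q hq]
      by_cases hqu : q = u p
      · simp [hMdef, hp, hq, hqu, hu p (le_of_not_gt hp), ite_smul, Finset.sum_ite_eq, eq_comm]
      · simp [hMdef, hp, hq, hqu]
    · rw [mul_comm, hnil q p (le_of_not_gt hq) (le_of_not_gt hp), Finset.sum_filter]
      simp [hMdef, hp, hq, ite_smul, max_comm]
  have hprod : (∑ p, c p • I p) * (∑ q, Ac q • I q)
      = ∑ k, (∑ p, ∑ q, c p * Ac q * M p q k) • I k := by
    rw [Finset.sum_mul_sum]
    have step1 : ∀ p q : Fin n, (c p • I p) * (Ac q • I q)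
        = ∑ k : Fin n, (c p * Ac q * M p q k) • I k := by
      intro p q
      rw [smul_mul_smul_comm, hM p q, Finset.smul_sum]
      exact Finset.sum_congr rfl fun k _ => by rw [smul_smul]
    calc (∑ p : Fin n, ∑ q : Fin n, (c p • I p) * (Ac q • I q))
        = ∑ p : Fin n, ∑ q : Fin n, ∑ k : Fin n, (c p * Ac q * M p q k) • I k :=
          Finset.sum_congr rfl fun p _ => Finset.sum_congr rfl fun q _ => step1 p q
      _ = ∑ p : Fin n, ∑ k : Fin n, ∑ q : Fin n, (c p * Ac q * M p q k) • I k :=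
          Finset.sum_congr rfl fun p _ => by rw [Finset.sum_comm]
      _ = ∑ k : Fin n, ∑ p : Fin n, ∑ q : Fin n, (c p * Ac q * M p q k) • I k := by
          rw [Finset.sum_comm]
      _ = ∑ k, (∑ p, ∑ q, c p * Ac q * M p q k) • I k := by
          exact Finset.sum_congr rfl fun k _ => by
            rw [Finset.sum_smul]
            exact Finset.sum_congr rfl fun p _ => by rw [Finset.sum_smul]
  have hE : ∀ k : Fin n, (∑ p, ∑ q, c p * Ac q * M p q k)
      = if (k : ℕ) < m then (1:ℂ) else 0 := by
    intro k
    by_cases hk : (k : ℕ) < m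
    · rw [if_pos hk]
      have hstep : ∀ p : Fin n, (∑ q, c p * Ac q * M p q k) = if p = k then (1:ℂ) else 0 := by
        intro p
        by_cases hp : (p : ℕ) < m
        · have inner : (∑ q, c p * Ac q * M p q k) = c p * Ac k * M p k k := by
            refine Finset.sum_eq_single_of_mem k (Finset.mem_univ k) fun q _ hqk => ?_
            by_cases hq : (q : ℕ) < m
            · simp only [hMdef, if_pos hp, if_pos hq]
              rw [if_neg, mul_zero]
              rintro ⟨h1, h2⟩
              exact hqk (h2.trans h1).symm
            · have hkq : ¬ k = q := fun h => hq (h ▸ hk)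
              simp [hMdef, hp, hq, hkq]
          rw [inner]
          have hMv : M p k k = if p = k then 1 else 0 := by
            by_cases hpk : p = k
            · simp [hMdef, hp, hk, hpk]
            · have hkp : ¬ k = p := fun h => hpk h.symm
              simp [hMdef, hp, hk, hpk, hkp]
          rw [hMv]
          by_cases hpk : p = k
          · rw [if_pos hpk, mul_one, hpk,
              show c k = t - ξ k from if_pos hk, hAc1 k hk]
            exact mul_one_div_cancel (sub_ne_zero_of_ne (ht k hk))
          · simp [hpk]
        · have hkp : ¬ p = k := fun h => hp (h ▸ hk)
          rw [if_neg hkp]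
          refine Finset.sum_eq_zero fun q _ => ?_
          by_cases hq : (q : ℕ) < m
          · have : ¬ k = p := fun h => hp (h ▸ hk)
            simp [hMdef, hp, hq, this]
          · simp only [hMdef, if_neg hp, if_neg hq]
            rw [if_neg, mul_zero]
            have := le_of_not_gt hp
            omega
      rw [Finset.sum_congr rfl fun p _ => hstep p, Finset.sum_ite_eq' Finset.univ k fun _ => (1:ℂ)]
      simp
    · rw [if_neg hk]
      have hk' : m ≤ (k : ℕ) := le_of_not_gt hk
      have hd : t - ξ (u k) ≠ 0 := sub_ne_zero_of_ne (ht (u k) (hu k hk'))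
      have hsplit : ∀ p : Fin n, (∑ q, c p * Ac q * M p q k) =
          (if (p:ℕ) < m then (if p = u k then (t - ξ (u k)) * Ac k else 0)
           else ((if k = p then -T k * Ac (u p) else 0)
             + ∑ q ∈ Finset.univ.filter (fun q : Fin n => ¬ (q:ℕ) < m),
                 c p * Ac q * (if max (p:ℕ) (q:ℕ) < (k:ℕ) then Υ q p k else 0))) := by
        intro p
        by_cases hp : (p:ℕ) < m
        · rw [if_pos hp]
          have inner : (∑ q, c p * Ac q * M p q k) = c p * Ac k * M p k k := by
            refine Finset.sum_eq_single_of_mem k (Finset.mem_univ k) fun q _ hqk => ?_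
            by_cases hq : (q : ℕ) < m
            · have : ¬ k = p := fun h => hk (h ▸ hp)
              simp [hMdef, hp, hq, this]
            · simp [hMdef, hp, hq, Ne.symm hqk]
          rw [inner]
          have hMv : M p k k = if p = u k then 1 else 0 := by
            simp [hMdef, hp, hk]
          rw [hMv]
          by_cases hpu : p = u k
          · rw [if_pos hpu, if_pos hpu, mul_one, hpu]
            congr 1
            simp [hc, hu k hk']
          · simp [hpu]
        · rw [if_neg hp,
            ← Finset.sum_filter_add_sum_filter_not Finset.univ (fun q : Fin n => (q:ℕ) < m)]
          congr 1
          · have inner : (∑ q ∈ Finset.univ.filter (fun q : Fin n => (q:ℕ) < m),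
                c p * Ac q * M p q k) = c p * Ac (u p) * M p (u p) k := by
              refine Finset.sum_eq_single_of_mem (u p)
                (Finset.mem_filter.mpr ⟨Finset.mem_univ _, hu p (le_of_not_gt hp)⟩)
                fun q hq hqup => ?_
              have hq' : (q:ℕ) < m := (Finset.mem_filter.mp hq).2
              simp [hMdef, hp, hq', hqup]
            rw [inner]
            have hMv : M p (u p) k = if k = p then 1 else 0 := by
              simp [hMdef, hp, hu p (le_of_not_gt hp)]
            rw [hMv]
            by_cases hkp : k = p
            · rw [if_pos hkp, if_pos hkp, mul_one]
              rw [show c p = -T p from if_neg hp, hkp]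
            · simp [hkp]
          · refine Finset.sum_congr rfl fun q hq => ?_
            have hq' : ¬ (q:ℕ) < m := (Finset.mem_filter.mp hq).2
            simp [hMdef, hp, hq']
      rw [Finset.sum_congr rfl fun p _ => hsplit p,
        ← Finset.sum_filter_add_sum_filter_not Finset.univ (fun p : Fin n => (p:ℕ) < m)]
      have e1 : (∑ p ∈ Finset.univ.filter (fun p : Fin n => (p:ℕ) < m),
          (if (p:ℕ) < m then (if p = u k then (t - ξ (u k)) * Ac k else 0)
           else ((if k = p then -T k * Ac (u p) else 0)
             + ∑ q ∈ Finset.univ.filter (fun q : Fin n => ¬ (q:ℕ) < m),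
                 c p * Ac q * (if max (p:ℕ) (q:ℕ) < (k:ℕ) then Υ q p k else 0))))
          = (t - ξ (u k)) * Ac k := by
        rw [Finset.sum_congr rfl fun p hp => if_pos (Finset.mem_filter.mp hp).2,
          Finset.sum_ite_eq' _ (u k) fun _ => (t - ξ (u k)) * Ac k]
        simp [hu k hk']
      rw [e1]
      have e2 : (∑ p ∈ Finset.univ.filter (fun p : Fin n => ¬ (p:ℕ) < m),
          (if (p:ℕ) < m then (if p = u k then (t - ξ (u k)) * Ac k else 0)
           else ((if k = p then -T k * Ac (u p) else 0)
             + ∑ q ∈ Finset.univ.filter (fun q : Fin n => ¬ (q:ℕ) < m),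
                 c p * Ac q * (if max (p:ℕ) (q:ℕ) < (k:ℕ) then Υ q p k else 0))))
          = -T k * Ac (u k)
            + ∑ p ∈ Finset.univ.filter (fun p : Fin n => ¬ (p:ℕ) < m),
                ∑ q ∈ Finset.univ.filter (fun q : Fin n => ¬ (q:ℕ) < m),
                 c p * Ac q * (if max (p:ℕ) (q:ℕ) < (k:ℕ) then Υ q p k else 0) := by
        rw [Finset.sum_congr rfl fun p hp => if_neg (Finset.mem_filter.mp hp).2,
          Finset.sum_add_distrib]
        congr 1
        rw [Finset.sum_ite_eq _ k fun p => -T k * Ac (u p)]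
        simp [hk]
      rw [e2]
      have e3 : (∑ p ∈ Finset.univ.filter (fun p : Fin n => ¬ (p:ℕ) < m),
                ∑ q ∈ Finset.univ.filter (fun q : Fin n => ¬ (q:ℕ) < m),
                 c p * Ac q * (if max (p:ℕ) (q:ℕ) < (k:ℕ) then Υ q p k else 0))
          = -(∑ r ∈ Finset.univ.filter (fun r : Fin n => m ≤ (r:ℕ) ∧ r < k), Ac r * B r k) := by
        rw [Finset.sum_comm]
        have hfil : Finset.univ.filter (fun r : Fin n => m ≤ (r:ℕ) ∧ r < k)
            = (Finset.univ.filter (fun r : Fin n => ¬ (r:ℕ) < m)).filter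
                (fun r : Fin n => r < k) := by
          rw [Finset.filter_filter]
          exact Finset.filter_congr fun r _ => by simp [not_lt]
        rw [hfil]
        conv_rhs => rw [Finset.sum_filter]
        rw [← Finset.sum_neg_distrib]
        refine Finset.sum_congr rfl fun q hq => ?_
        have hq' : ¬ (q:ℕ) < m := (Finset.mem_filter.mp hq).2
        by_cases hqk : q < k
        · rw [if_pos hqk, hB q k, hfil]
          conv_rhs => rw [Finset.sum_filter]
          rw [Finset.mul_sum, ← Finset.sum_neg_distrib]
          refine Finset.sum_congr rfl fun p hp => ?_
          have hp' : ¬ (p:ℕ) < m := (Finset.mem_filter.mp hp).2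
          by_cases hpk : p < k
          · have hmax : max (p:ℕ) (q:ℕ) < (k:ℕ) := by
              have h1 := Fin.lt_def.mp hqk
              have h2 := Fin.lt_def.mp hpk
              omega
            rw [if_pos hmax, if_pos hpk, show c p = -T p from if_neg hp']
            ring
          · have hmax : ¬ max (p:ℕ) (q:ℕ) < (k:ℕ) := by
              have h2 : (k:ℕ) ≤ (p:ℕ) := Fin.le_def.mp (not_lt.mp hpk)
              omega
            rw [if_neg hmax, if_neg hpk]
            simp
        · rw [if_neg hqk, neg_zero]
          refine Finset.sum_eq_zero fun p _ => ?_
          have hmax : ¬ max (p:ℕ) (q:ℕ) < (k:ℕ) := by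
            have h2 : (k:ℕ) ≤ (q:ℕ) := Fin.le_def.mp (not_lt.mp hqk)
            omega
          simp [hmax]
      rw [e3, hAc2 k hk', hAc1 (u k) (hu k hk')]
      field_simp
      ring
  have hmain : (algebraMap ℂ A t - ζ) * (∑ r, Ac r • I r) = 1 := by
    rw [hsub, hprod]
    rw [show (∑ k, (∑ p, ∑ q, c p * Ac q * M p q k) • I k)
        = ∑ k : Fin n, (if (k : ℕ) < m then (1:ℂ) else 0) • I k from
      Finset.sum_congr rfl fun k _ => by rw [hE k]]
    rw [← hone, Finset.sum_filter]
    exact Finset.sum_congr rfl fun p _ => by split <;> simp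
  exact ⟨IsUnit.of_mul_eq_one _ hmain, hmain⟩
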